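/- Let n be prime and let i, s be integers with 1 ≤ i ≤ n−1. Suppose b : ℤ_n → 𝔽₂ satisfies b(s) = b(2s) + b(2s − i) for all s ∈ ℤ_n. Then for every t with 1 ≤ t ≤ n−1 and every s ∈ ℤ_n, b(s) = Σ_{ℓ=0}^{2^t − 1} b(2^t·s − ℓ·i). -/

import Mathlib

open Finset

lemma sum_range_two_mul' {M : Type*} [AddCommMonoid M] (m : ℕ) (f : ℕ → M) :
    ∑ k ∈ Finset.range (2 * m), f k = ∑ k ∈ Finset.range m, (f (2 * k) + f (2 * k + 1)) := by
  induction m with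
  | zero => simp
  | succ m ih =>
      rw [Nat.mul_succ, Finset.sum_range_succ, Finset.sum_range_succ, Finset.sum_range_succ, ← ih]
      ring_nf
      rw [add_assoc]

theorem stmt_10 (n i : ℕ) (hn : n.Prime) (hi1 : 1 ≤ i) (hi2 : i ≤ n - 1)
    (b : ZMod n → ZMod 2)
    (hrec : ∀ s : ZMod n, b s = b (2 * s) + b (2 * s - (i : ZMod n))) :
    ∀ t : ℕ, 1 ≤ t → t ≤ n - 1 → ∀ s : ZMod n,
      b s = ∑ ℓ ∈ Finset.range (2 ^ t), b ((2 : ZMod n) ^ t * s - (ℓ : ZMod n) * (i : ZMod n)) := by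
  have key : ∀ t : ℕ, ∀ s : ZMod n,
      b s = ∑ ℓ ∈ Finset.range (2 ^ t), b ((2 : ZMod n) ^ t * s - (ℓ : ZMod n) * (i : ZMod n)) := by
    intro t
    induction t with
    | zero => intro s; simp
    | succ t ih =>
        intro s
        rw [ih s, pow_succ, mul_comm (2 ^ t) 2, sum_range_two_mul']
        refine Finset.sum_congr rfl fun k _ => ?_
        rw [hrec ((2 : ZMod n) ^ t * s - (k : ZMod n) * (i : ZMod n))]
        congr 1
        · push_cast; ring
        · push_cast; ring
  exact fun t _ _ s => key t s
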